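/- Let f and g be tropical polynomials in n variables. If for every vertex (extreme point) v of the Newton polyhedron N(g) ⊆ ℝ^{n+1} there exist a real number t > 0 and a translation s : ℝ^{n+1} → ℝ^{n+1} with v ∈ s(t·N(f)) and s(t·N(f)) ⊆ N(g), then Trop(f) ⊆ Trop(g). -/

import Mathlib

open Finset

/-- A tropical polynomial in `n` variables: `k ≥ 1` monomials with exponent
vectors `a i : Fin n → ℕ` and coefficients `c i : ℝ`, the pairs `(a i, c i)`
being pairwise distinct. -/
structure TropPoly (n : ℕ) where
  k : ℕ
  hk : 0 < k
  a : Fin k → Fin n → ℕ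
  c : Fin k → ℝ
  distinct : Function.Injective (fun i => (a i, c i))

namespace TropPoly

variable {n : ℕ}

/-- Value of the `i`-th tropical monomial at `x`: `⟨a i, x⟩ + c i`. -/
def mono (f : TropPoly n) (i : Fin f.k) (x : Fin n → ℝ) : ℝ :=
  (∑ j, (f.a i j : ℝ) * x j) + f.c i

/-- Value of the tropical polynomial: `f(x) = min_i (⟨a i, x⟩ + c i)`. -/
def eval (f : TropPoly n) (x : Fin n → ℝ) : ℝ :=
  Finset.univ.inf' ⟨⟨0, f.hk⟩, Finset.mem_univ _⟩ (fun i => f.mono i x)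

/-- The tropical hypersurface `Trop(f)`: points where the minimum is attained
at least at two distinct monomials. -/
def tropSet (f : TropPoly n) : Set (Fin n → ℝ) :=
  {x | ∃ i j : Fin f.k, i ≠ j ∧ f.mono i x = f.eval x ∧ f.mono j x = f.eval x}

/-- The Newton polyhedron `N(f) ⊆ ℝ^{n+1}`: the convex hull of the union of
the vertical rays `{(a i, c) : c ≥ c i}`. -/
def newton (f : TropPoly n) : Set ((Fin n → ℝ) × ℝ) :=
  convexHull ℝ {p | ∃ i : Fin f.k, p.1 = (fun j => (f.a i j : ℝ)) ∧ f.c i ≤ p.2}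

end TropPoly

/-- The linear functional `φ_x(z, a) = ⟨x, z⟩ + a` on `ℝ^{n+1}`. -/
def phi {n : ℕ} (x : Fin n → ℝ) (p : (Fin n → ℝ) × ℝ) : ℝ :=
  (∑ j, x j * p.1 j) + p.2

/-- The convex cone generated by a set `S`: all nonnegative linear
combinations of elements of `S`. -/
def coneGen {E : Type*} [AddCommMonoid E] [Module ℝ E] (S : Set E) : Set E :=
  {y | ∃ (m : ℕ) (t : Fin m → ℝ) (p : Fin m → E),
    (∀ i, 0 ≤ t i) ∧ (∀ i, p i ∈ S) ∧ y = ∑ i, t i • p i}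

/-- `phi x` as a linear map. -/
def phiL {n : ℕ} (x : Fin n → ℝ) : ((Fin n → ℝ) × ℝ) →ₗ[ℝ] ℝ where
  toFun := phi x
  map_add' p q := by
    simp [phi, mul_add, Finset.sum_add_distrib]; ring
  map_smul' t p := by
    simp [phi, Finset.mul_sum, mul_add, mul_left_comm]

lemma phiL_apply {n : ℕ} (x : Fin n → ℝ) (p : (Fin n → ℝ) × ℝ) :
    phiL x p = phi x p := rfl

lemma phi_comb {n : ℕ} (x : Fin n → ℝ) (a b : ℝ) (p q : (Fin n → ℝ) × ℝ) :
    phi x (a • p + b • q) = a * phi x p + b * phi x q := by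
  rw [← phiL_apply, map_add, map_smul, map_smul, phiL_apply, phiL_apply,
    smul_eq_mul, smul_eq_mul]

lemma phi_shift {n : ℕ} (x : Fin n → ℝ) (t : ℝ) (p b : (Fin n → ℝ) × ℝ) :
    phi x (t • p + b) = t * phi x p + phi x b := by
  rw [← phiL_apply, map_add, map_smul, phiL_apply, phiL_apply, smul_eq_mul]

lemma phi_gen {n : ℕ} (f : TropPoly n) (x : Fin n → ℝ) (i : Fin f.k) :
    phi x ((fun j => (f.a i j : ℝ)), f.c i) = f.mono i x := by
  simp [phi, TropPoly.mono, mul_comm]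

lemma eval_le_mono {n : ℕ} (f : TropPoly n) (x : Fin n → ℝ) (i : Fin f.k) :
    f.eval x ≤ f.mono i x :=
  Finset.inf'_le _ (Finset.mem_univ i)

lemma eval_le_phi {n : ℕ} (f : TropPoly n) (x : Fin n → ℝ) :
    ∀ p ∈ f.newton, f.eval x ≤ phi x p := by
  have hconv : Convex ℝ (phiL x ⁻¹' Set.Ici (f.eval x)) :=
    (convex_Ici _).linear_preimage _
  have hsub : {p : (Fin n → ℝ) × ℝ |
      ∃ i : Fin f.k, p.1 = (fun j => (f.a i j : ℝ)) ∧ f.c i ≤ p.2}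
      ⊆ phiL x ⁻¹' Set.Ici (f.eval x) := by
    rintro p ⟨i, h1, h2⟩
    have h3 : f.eval x ≤ f.mono i x := eval_le_mono f x i
    have h4 : phi x p = f.mono i x + (p.2 - f.c i) := by
      simp only [phi, TropPoly.mono, h1]
      rw [show (∑ j, x j * (f.a i j : ℝ)) = ∑ j, (f.a i j : ℝ) * x j from
        Finset.sum_congr rfl (fun j _ => mul_comm _ _)]
      ring
    simp only [Set.mem_preimage, Set.mem_Ici, phiL_apply, h4]
    linarith
  exact fun p hp => convexHull_min hsub hconv hp

lemma unique_min {n : ℕ} (g : TropPoly n) (x : Fin n → ℝ) (hx : x ∉ g.tropSet)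
    (i0 : Fin g.k) (hi0 : g.mono i0 x = g.eval x) :
    ∀ p ∈ g.newton, phi x p = g.eval x →
      p = ((fun j => (g.a i0 j : ℝ)), g.c i0) := by
  set v : (Fin n → ℝ) × ℝ := ((fun j => (g.a i0 j : ℝ)), g.c i0) with hv
  set S : Set ((Fin n → ℝ) × ℝ) :=
    {p | ∃ i : Fin g.k, p.1 = (fun j => (g.a i j : ℝ)) ∧ g.c i ≤ p.2} with hS
  -- on generators
  have hgen : ∀ z ∈ S, phi x z = g.eval x → z = v := by
    rintro z ⟨i, h1, h2⟩ hze
    have h3 : g.eval x ≤ g.mono i x := eval_le_mono g x i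
    have h4 : phi x z = g.mono i x + (z.2 - g.c i) := by
      simp only [phi, TropPoly.mono, h1]
      rw [show (∑ j, x j * (g.a i j : ℝ)) = ∑ j, (g.a i j : ℝ) * x j from
        Finset.sum_congr rfl (fun j _ => mul_comm _ _)]
      ring
    have hmi : g.mono i x = g.eval x := by linarith
    have hz2 : z.2 = g.c i := by linarith
    have hii0 : i = i0 := by
      by_contra hne
      exact hx ⟨i, i0, hne, hmi, hi0⟩
    subst hii0
    exact Prod.ext (by rw [h1]) (by rw [hz2])
  intro p hp hpe
  rw [TropPoly.newton, _root_.convexHull_eq] at hp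
  obtain ⟨ι, t, w, z, hw0, hw1, hzS, hcm⟩ := hp
  have hps : p = ∑ i ∈ t, w i • z i := by
    rw [← hcm, Finset.centerMass_eq_of_sum_1 _ _ hw1]
  have hphis : phi x p = ∑ i ∈ t, w i * phi x (z i) := by
    rw [hps, ← phiL_apply, map_sum]
    exact Finset.sum_congr rfl fun i _ => by rw [map_smul, smul_eq_mul, phiL_apply]
  have hge : ∀ i ∈ t, g.eval x ≤ phi x (z i) := fun i hi =>
    eval_le_phi g x _ (subset_convexHull ℝ S (hzS i hi))
  have hzero : ∑ i ∈ t, w i * (phi x (z i) - g.eval x) = 0 := by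
    have : ∑ i ∈ t, w i * (phi x (z i) - g.eval x)
        = (∑ i ∈ t, w i * phi x (z i)) - (∑ i ∈ t, w i) * g.eval x := by
      rw [Finset.sum_mul, ← Finset.sum_sub_distrib]
      exact Finset.sum_congr rfl fun i _ => by ring
    rw [this, ← hphis, hpe, hw1]; ring
  have hterm : ∀ i ∈ t, w i * (phi x (z i) - g.eval x) = 0 := by
    rw [← Finset.sum_eq_zero_iff_of_nonneg
      (fun i hi => mul_nonneg (hw0 i hi) (by linarith [hge i hi]))]
    exact hzero
  have hkey : ∀ i ∈ t, w i • z i = w i • v := by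
    intro i hi
    rcases mul_eq_zero.1 (hterm i hi) with h | h
    · rw [h, zero_smul, zero_smul]
    · rw [hgen (z i) (hzS i hi) (by linarith [sub_eq_zero.1 h])]
  rw [hps, Finset.sum_congr rfl hkey, ← Finset.sum_smul, hw1, one_smul]


/-- if for every extreme point `v` of `N(g)` some translate of a
homothety `t · N(f)` (with `t > 0`) is inscribed in `N(g)` at `v`, then
`Trop(f) ⊆ Trop(g)`. -/
theorem trop_subset_of_totally_inscribable {n : ℕ} (f g : TropPoly n)
    (h : ∀ v ∈ Set.extremePoints ℝ g.newton,
      ∃ t : ℝ, 0 < t ∧ ∃ b : (Fin n → ℝ) × ℝ,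
        v ∈ (fun y => t • y + b) '' f.newton ∧
          (fun y => t • y + b) '' f.newton ⊆ g.newton) :
    f.tropSet ⊆ g.tropSet := by
  intro x hx
  by_contra hg
  obtain ⟨i0, -, hi0⟩ := Finset.exists_mem_eq_inf'
    (⟨⟨0, g.hk⟩, Finset.mem_univ _⟩ : (Finset.univ : Finset (Fin g.k)).Nonempty)
    (fun i => g.mono i x)
  have hi0' : g.mono i0 x = g.eval x := hi0.symm
  set v : (Fin n → ℝ) × ℝ := ((fun j => (g.a i0 j : ℝ)), g.c i0) with hv
  have hvN : v ∈ g.newton := subset_convexHull ℝ _ ⟨i0, rfl, le_refl _⟩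
  have hφv : phi x v = g.eval x := by rw [phi_gen]; exact hi0'
  have huniq := unique_min g x hg i0 hi0'
  have hvex : v ∈ Set.extremePoints ℝ g.newton := by
    refine ⟨hvN, ?_⟩
    intro x1 hx1 x2 hx2 hseg
    obtain ⟨α, β, hα, hβ, hαβ, hcomb⟩ := hseg
    have h1 := eval_le_phi g x x1 hx1
    have h2 := eval_le_phi g x x2 hx2
    have hsum : α * phi x x1 + β * phi x x2 = g.eval x := by
      rw [← phi_comb, hcomb, hφv]
    have hαβe : α * g.eval x + β * g.eval x = g.eval x := by
      rw [← add_mul, hαβ, one_mul]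
    have e1 : phi x x1 = g.eval x := by
      by_contra hne
      have hlt : g.eval x < phi x x1 := lt_of_le_of_ne h1 (Ne.symm hne)
      nlinarith [mul_pos hα (sub_pos.2 hlt), mul_nonneg hβ.le (sub_nonneg.2 h2), hαβe]
    have e2 : phi x x2 = g.eval x := by
      by_contra hne
      have hlt : g.eval x < phi x x2 := lt_of_le_of_ne h2 (Ne.symm hne)
      nlinarith [mul_pos hβ (sub_pos.2 hlt), mul_nonneg hα.le (sub_nonneg.2 h1), hαβe]
    exact huniq x1 hx1 e1
  obtain ⟨t, ht, b, ⟨w, hwN, hwv⟩, hsub⟩ := h v hvex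
  obtain ⟨i, j, hij, hfi, hfj⟩ := hx
  set pi : (Fin n → ℝ) × ℝ := ((fun j' => (f.a i j' : ℝ)), f.c i) with hpi
  set pj : (Fin n → ℝ) × ℝ := ((fun j' => (f.a j j' : ℝ)), f.c j) with hpj
  have hpiN : pi ∈ f.newton := subset_convexHull ℝ _ ⟨i, rfl, le_refl _⟩
  have hpjN : pj ∈ f.newton := subset_convexHull ℝ _ ⟨j, rfl, le_refl _⟩
  have hφpi : phi x pi = f.eval x := by rw [phi_gen]; exact hfi
  have hφpj : phi x pj = f.eval x := by rw [phi_gen]; exact hfj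
  have hwe : f.eval x ≤ phi x w := eval_le_phi f x w hwN
  have hφvw : phi x v = t * phi x w + phi x b := by
    rw [← hwv]; exact (phi_shift x t w b).symm ▸ rfl
  have himg : ∀ p ∈ f.newton, t • p + b ∈ g.newton := fun p hp =>
    hsub ⟨p, hp, rfl⟩
  have key : ∀ p ∈ f.newton, phi x p = f.eval x → t • p + b = v := by
    intro p hp hpe
    refine huniq _ (himg p hp) (le_antisymm ?_ (eval_le_phi g x _ (himg p hp)))
    rw [phi_shift, hpe, ← hφv, hφvw]
    nlinarith
  have hvi := key pi hpiN hφpi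
  have hvj := key pj hpjN hφpj
  have : t • pi = t • pj := by
    have := hvi.trans hvj.symm
    exact add_right_cancel this
  have hpij : pi = pj := smul_right_injective _ (ne_of_gt ht) this
  have h1' : (fun j' => (f.a i j' : ℝ)) = (fun j' => (f.a j j' : ℝ)) :=
    congrArg Prod.fst hpij
  have haij : f.a i = f.a j := by
    funext k'
    exact_mod_cast congrFun h1' k'
  have hcij : f.c i = f.c j := congrArg Prod.snd hpij
  exact hij (f.distinct (by simp [haij, hcij]))
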